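/- For a 3×3 filter F, the convolution equation F∗X = B with zero boundary condition is equivalent to the generalized Sylvester equation F₁·X·L_n + F₂·X + F₃·X·U_n = B, where F_i = tridiag(f_{1i}, f_{2i}, f_{3i}) ∈ ℝ^{m×m} and U_n, L_n are the upper and lower shift matrices. -/
import Mathlib

open Matrix

/-- Upper shift matrix: 1's on the superdiagonal. -/
def Umat (k : ℕ) : Matrix (Fin k) (Fin k) ℝ :=
  Matrix.of fun i j => if (i : ℕ) + 1 = (j : ℕ) then 1 else 0

/-- Lower shift matrix: 1's on the subdiagonal. -/
def Lmat (k : ℕ) : Matrix (Fin k) (Fin k) ℝ :=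
  Matrix.of fun i j => if (j : ℕ) + 1 = (i : ℕ) then 1 else 0

/-- Tridiagonal Toeplitz matrix `tridiag(f1, f2, f3)`: superdiagonal `f1`, diagonal `f2`,
subdiagonal `f3`. -/
def triMat (m : ℕ) (f1 f2 f3 : ℝ) : Matrix (Fin m) (Fin m) ℝ :=
  Matrix.of fun i j =>
    if (i : ℕ) = (j : ℕ) then f2
    else if (i : ℕ) + 1 = (j : ℕ) then f1
    else if (j : ℕ) + 1 = (i : ℕ) then f3
    else 0

def padX (m n : ℕ) (X : Matrix (Fin m) (Fin n) ℝ) (p q : ℕ) : ℝ :=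
  if h : 1 ≤ p ∧ p ≤ m ∧ 1 ≤ q ∧ q ≤ n then
    X ⟨p - 1, by omega⟩ ⟨q - 1, by omega⟩ else 0

lemma sum_indicator {m : ℕ} (t : ℕ) (g : Fin m → ℝ) :
    (∑ k : Fin m, if t = (k : ℕ) then g k else 0) = if h : t < m then g ⟨t, h⟩ else 0 := by
  split_ifs with h
  · have e : ∀ k : Fin m, (if t = (k : ℕ) then g k else 0)
        = if (⟨t, h⟩ : Fin m) = k then g k else 0 := by
      intro k; congr 1; simp [Fin.ext_iff]
    simp_rw [e]
    simp
  · apply Finset.sum_eq_zero; intro k _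
    rw [if_neg]; have := k.isLt; omega

lemma dite_pad {m n : ℕ} (X : Matrix (Fin m) (Fin n) ℝ) (t : ℕ) (j : Fin n) (r : ℝ) :
    (if h : t < m then r * X ⟨t, h⟩ j else 0) = r * padX m n X (t + 1) ((j : ℕ) + 1) := by
  have hj := j.isLt
  unfold padX
  split_ifs with h1 h2 h2
  · rfl
  · exfalso; omega
  · exfalso; omega
  · ring

lemma tri_mul {m n : ℕ} (a b c : ℝ) (X : Matrix (Fin m) (Fin n) ℝ) (i : Fin m) (j : Fin n) :
    (triMat m a b c * X) i j =
      a * padX m n X ((i : ℕ) + 2) ((j : ℕ) + 1)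
      + b * padX m n X ((i : ℕ) + 1) ((j : ℕ) + 1)
      + c * padX m n X (i : ℕ) ((j : ℕ) + 1) := by
  rw [Matrix.mul_apply]
  have hsplit : ∀ k : Fin m, triMat m a b c i k * X k j =
      (if (i : ℕ) + 1 = (k : ℕ) then a * X k j else 0)
      + (if (i : ℕ) = (k : ℕ) then b * X k j else 0)
      + (if (k : ℕ) + 1 = (i : ℕ) then c * X k j else 0) := by
    intro k
    simp only [triMat, Matrix.of_apply]
    split_ifs <;> first | (exfalso; omega) | ring
  simp_rw [hsplit, Finset.sum_add_distrib]
  rw [sum_indicator ((i : ℕ) + 1) (fun k => a * X k j),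
      sum_indicator (i : ℕ) (fun k => b * X k j)]
  have h3 : (∑ k : Fin m, if (k : ℕ) + 1 = (i : ℕ) then c * X k j else 0)
      = c * padX m n X (i : ℕ) ((j : ℕ) + 1) := by
    by_cases hi : (i : ℕ) = 0
    · rw [Finset.sum_eq_zero (fun k _ => by rw [if_neg]; omega)]
      unfold padX; rw [dif_neg (by omega)]; ring
    · have e : ∀ k : Fin m, ((k : ℕ) + 1 = (i : ℕ)) = ((i : ℕ) - 1 = (k : ℕ)) := by
        intro k; exact propext ⟨fun h => by omega, fun h => by omega⟩
      simp_rw [e]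
      rw [sum_indicator ((i : ℕ) - 1) (fun k => c * X k j), dite_pad]
      have : (i : ℕ) - 1 + 1 = (i : ℕ) := by omega
      rw [this]
  rw [h3, dite_pad, dite_pad]

lemma mul_L {m n : ℕ} (A : Matrix (Fin m) (Fin n) ℝ) (i : Fin m) (j : Fin n) :
    (A * Lmat n) i j = if h : (j : ℕ) + 1 < n then A i ⟨(j : ℕ) + 1, h⟩ else 0 := by
  rw [Matrix.mul_apply]
  have e : ∀ l : Fin n, A i l * Lmat n l j = if (j : ℕ) + 1 = (l : ℕ) then A i l else 0 := by
    intro l; simp only [Lmat, Matrix.of_apply, mul_ite, mul_one, mul_zero]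
  simp_rw [e]
  exact sum_indicator _ _

lemma mul_U {m n : ℕ} (A : Matrix (Fin m) (Fin n) ℝ) (i : Fin m) (j : Fin n) :
    (A * Umat n) i j = if h : 1 ≤ (j : ℕ) then A i ⟨(j : ℕ) - 1, by have := j.isLt; omega⟩ else 0 := by
  rw [Matrix.mul_apply]
  have e : ∀ l : Fin n, A i l * Umat n l j = if (l : ℕ) + 1 = (j : ℕ) then A i l else 0 := by
    intro l; simp only [Umat, Matrix.of_apply, mul_ite, mul_one, mul_zero]
  simp_rw [e]
  by_cases hj : (j : ℕ) = 0
  · rw [Finset.sum_eq_zero (fun k _ => by rw [if_neg]; omega), dif_neg (by omega)]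
  · have e2 : ∀ l : Fin n, ((l : ℕ) + 1 = (j : ℕ)) = ((j : ℕ) - 1 = (l : ℕ)) := by
      intro l; exact propext ⟨fun h => by omega, fun h => by omega⟩
    simp_rw [e2]
    rw [sum_indicator ((j : ℕ) - 1) (fun l => A i l), dif_pos (by omega),
        dif_pos (by have := j.isLt; omega)]

lemma full_L {m n : ℕ} (a b c : ℝ) (X : Matrix (Fin m) (Fin n) ℝ) (i : Fin m) (j : Fin n) :
    (triMat m a b c * X * Lmat n) i j =
      a * padX m n X ((i : ℕ) + 2) ((j : ℕ) + 2)
      + b * padX m n X ((i : ℕ) + 1) ((j : ℕ) + 2)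
      + c * padX m n X (i : ℕ) ((j : ℕ) + 2) := by
  rw [mul_L]
  split_ifs with h
  · rw [tri_mul]
  · unfold padX
    rw [dif_neg (by omega), dif_neg (by omega), dif_neg (by omega)]
    ring

lemma full_U {m n : ℕ} (a b c : ℝ) (X : Matrix (Fin m) (Fin n) ℝ) (i : Fin m) (j : Fin n) :
    (triMat m a b c * X * Umat n) i j =
      a * padX m n X ((i : ℕ) + 2) (j : ℕ)
      + b * padX m n X ((i : ℕ) + 1) (j : ℕ)
      + c * padX m n X (i : ℕ) (j : ℕ) := by
  rw [mul_U]
  split_ifs with h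
  · rw [tri_mul]
    have e : (j : ℕ) - 1 + 1 = (j : ℕ) := by omega
    rw [e]
  · unfold padX
    rw [dif_neg (by omega), dif_neg (by omega), dif_neg (by omega)]
    ring

/-- The convolution equation `F ∗ X = B` with the zero boundary condition is equivalent to the
generalized Sylvester equation `F₁ X Lₙ + F₂ X + F₃ X Uₙ = B`.  Here `x : Fin (m+2) → Fin (n+2) → ℝ`
is the padded array (`x i j` is the paper's `x_{ij}` for `0 ≤ i ≤ m+1`, `0 ≤ j ≤ n+1`),
determined by `X` in the interior and by the zero boundary condition on the boundary. -/
theorem stmt4 (m n : ℕ) (hm : 0 < m) (hn : 0 < n)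
    (F : Matrix (Fin 3) (Fin 3) ℝ) (X B : Matrix (Fin m) (Fin n) ℝ)
    (x : Fin (m + 2) → Fin (n + 2) → ℝ)
    (hint : ∀ (i : Fin m) (j : Fin n), x i.succ.castSucc j.succ.castSucc = X i j)
    (htop : ∀ j, x 0 j = 0) (hbot : ∀ j, x (Fin.last (m + 1)) j = 0)
    (hleft : ∀ i, x i 0 = 0) (hright : ∀ i, x i (Fin.last (n + 1)) = 0) :
    (∀ (i : Fin m) (j : Fin n),
        (∑ l₁ : Fin 3, ∑ l₂ : Fin 3, F l₁ l₂ *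
          x ⟨(i : ℕ) + 2 - (l₁ : ℕ), by have h1 := i.isLt; have h2 := l₁.isLt; omega⟩
            ⟨(j : ℕ) + 2 - (l₂ : ℕ), by have h1 := j.isLt; have h2 := l₂.isLt; omega⟩) = B i j)
      ↔
    triMat m (F 0 0) (F 1 0) (F 2 0) * X * Lmat n
      + triMat m (F 0 1) (F 1 1) (F 2 1) * X
      + triMat m (F 0 2) (F 1 2) (F 2 2) * X * Umat n = B := by
  have key : ∀ (p : Fin (m + 2)) (q : Fin (n + 2)), x p q = padX m n X (p : ℕ) (q : ℕ) := by
    intro p q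
    by_cases hp1 : (p : ℕ) = 0
    · have hp : p = 0 := Fin.ext (by simpa using hp1)
      rw [hp, htop]
      simp [padX]
    by_cases hp2 : (p : ℕ) = m + 1
    · have hp : p = Fin.last (m + 1) := Fin.ext (by simpa using hp2)
      rw [hp, hbot]
      unfold padX
      rw [dif_neg (by simp only [Fin.val_last]; omega)]
    by_cases hq1 : (q : ℕ) = 0
    · have hq : q = 0 := Fin.ext (by simpa using hq1)
      rw [hq, hleft]
      unfold padX
      rw [dif_neg (by simp only [Fin.val_zero]; omega)]
    by_cases hq2 : (q : ℕ) = n + 1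
    · have hq : q = Fin.last (n + 1) := Fin.ext (by simpa using hq2)
      rw [hq, hright]
      unfold padX
      rw [dif_neg (by simp only [Fin.val_last]; omega)]
    · have hpl := p.isLt
      have hql := q.isLt
      set i : Fin m := ⟨(p : ℕ) - 1, by omega⟩ with hi
      set j : Fin n := ⟨(q : ℕ) - 1, by omega⟩ with hj
      have hp : p = i.succ.castSucc := Fin.ext (by simp [hi]; omega)
      have hq : q = j.succ.castSucc := Fin.ext (by simp [hj]; omega)
      rw [hp, hq, hint]
      unfold padX
      rw [dif_pos (by simp [hi, hj]; omega)]
      rfl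
  have entry : ∀ (i : Fin m) (j : Fin n),
      (∑ l₁ : Fin 3, ∑ l₂ : Fin 3, F l₁ l₂ *
          x ⟨(i : ℕ) + 2 - (l₁ : ℕ), by have h1 := i.isLt; have h2 := l₁.isLt; omega⟩
            ⟨(j : ℕ) + 2 - (l₂ : ℕ), by have h1 := j.isLt; have h2 := l₂.isLt; omega⟩) =
      (triMat m (F 0 0) (F 1 0) (F 2 0) * X * Lmat n
        + triMat m (F 0 1) (F 1 1) (F 2 1) * X
        + triMat m (F 0 2) (F 1 2) (F 2 2) * X * Umat n) i j := by
    intro i j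
    rw [Matrix.add_apply, Matrix.add_apply, full_L, tri_mul, full_U]
    simp only [Fin.sum_univ_three, key, Fin.val_zero, Fin.val_one, Fin.val_two,
      Nat.sub_zero, Nat.add_sub_cancel]
    have e1 : (i : ℕ) + 2 - 1 = (i : ℕ) + 1 := by omega
    have e2 : (j : ℕ) + 2 - 1 = (j : ℕ) + 1 := by omega
    rw [e1, e2]
    ring
  rw [← Matrix.ext_iff]
  exact forall_congr' fun i => forall_congr' fun j => by rw [entry i j]
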